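/- arXiv:0911.1154 — 9 statements merged into one kernel-verified Lean document; each statement's English description precedes it below -/
import Mathlib

section
/- If G is a finite group with Sylow 2-subgroup S and N = N_G(S) its normalizer, then j(G)/|G| ≤ |S|/|N|, where j(G) is the number of elements of G with x^2 = 1. -/
theorem stmt_8 (G : Type*) [Group G] [Finite G] (S : Sylow 2 G) :
    Nat.card {x : G // x ^ 2 = 1} * Nat.card (Subgroup.normalizer ((S : Subgroup G) : Set G)) ≤
      Nat.card G * Nat.card (S : Subgroup G) := by
  have hp : Fact (Nat.Prime 2) := ⟨Nat.prime_two⟩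
  cases nonempty_fintype G
  classical
  -- every x with x^2 = 1 lies in some Sylow 2-subgroup
  have hsyl : ∀ x : {x : G // x ^ 2 = 1}, ∃ Q : Sylow 2 G, (x : G) ∈ (Q : Subgroup G) := by
    intro ⟨x, hx⟩
    have hpg : IsPGroup 2 (Subgroup.zpowers x) := by
      rintro ⟨g, hg⟩
      obtain ⟨n, rfl⟩ := hg
      refine ⟨1, ?_⟩
      ext
      push_cast
      rw [← zpow_natCast, ← zpow_mul, mul_comm n ((2:ℕ):ℤ), zpow_mul, zpow_natCast, hx, one_zpow]
    obtain ⟨Q, hQ⟩ := hpg.exists_le_sylow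
    exact ⟨Q, hQ (Subgroup.mem_zpowers x)⟩
  choose f hf using hsyl
  have hinj : Nat.card {x : G // x ^ 2 = 1} ≤
      Nat.card (Σ P : Sylow 2 G, (P : Subgroup G)) := by
    apply Nat.card_le_card_of_injective
      (fun x => (⟨f x, ⟨(x : G), hf x⟩⟩ : Σ P : Sylow 2 G, (P : Subgroup G)))
    intro a b hab
    have := congrArg (fun s : (Σ P : Sylow 2 G, (P : Subgroup G)) => ((s.2 : G) : G)) hab
    exact Subtype.ext this
  have hcard : Nat.card (Σ P : Sylow 2 G, (P : Subgroup G)) =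
      Nat.card (Sylow 2 G) * Nat.card (S : Subgroup G) := by
    simp only [Nat.card_eq_fintype_card, Fintype.card_sigma]
    have h2 : ∀ P : Sylow 2 G, Fintype.card (P : Subgroup G) =
        Fintype.card (S : Subgroup G) := by
      intro P
      rw [← Nat.card_eq_fintype_card, ← Nat.card_eq_fintype_card,
        Sylow.card_eq_multiplicity, Sylow.card_eq_multiplicity]
    rw [Finset.sum_congr rfl (fun P _ => h2 P), Finset.sum_const, Finset.card_univ,
      smul_eq_mul]
  have hG : Nat.card G = Nat.card (Sylow 2 G) * Nat.card (Subgroup.normalizer ((S : Subgroup G) : Set G)) := by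
    rw [S.card_eq_card_quotient_normalizer]
    exact Subgroup.card_eq_card_quotient_mul_card_subgroup _
  calc Nat.card {x : G // x ^ 2 = 1} * Nat.card (Subgroup.normalizer ((S : Subgroup G) : Set G))
      ≤ Nat.card (Σ P : Sylow 2 G, (P : Subgroup G)) *
        Nat.card (Subgroup.normalizer ((S : Subgroup G) : Set G)) := Nat.mul_le_mul_right _ hinj
    _ = Nat.card G * Nat.card (S : Subgroup G) := by rw [hcard, hG]; ring
end

section
/- If G is a finite group in which more than half the elements satisfy x^2 = 1, then every Sylow 2-subgroup of G is self-normalizing, i.e., N_G(S) = S. -/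
theorem stmt_9 (G : Type*) [Group G] [Finite G]
    (h : 2 * Nat.card {x : G // x ^ 2 = 1} > Nat.card G) (S : Sylow 2 G) :
    Subgroup.normalizer ((S : Subgroup G) : Set G) = S := by
  classical
  by_contra hne
  set N := Subgroup.normalizer ((S : Subgroup G) : Set G) with hN
  have hle : (S : Subgroup G) ≤ N := Subgroup.le_normalizer
  -- every involution lies in some Sylow 2-subgroup
  have hQ : ∀ x : {x : G // x ^ 2 = 1}, ∃ Q : Sylow 2 G, (x : G) ∈ (Q : Subgroup G) := by
    intro ⟨x, hx⟩
    have hpg : IsPGroup 2 (Subgroup.zpowers x) := by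
      intro ⟨g, hg⟩
      refine ⟨1, ?_⟩
      obtain ⟨n, rfl⟩ := hg
      have : (x ^ n) ^ (2 : ℕ) = (x ^ (2:ℕ)) ^ n := by
        rw [← zpow_natCast, ← zpow_natCast, ← zpow_mul, ← zpow_mul, mul_comm]
      ext
      simp only [Subgroup.coe_pow, OneMemClass.coe_one]
      rw [pow_one, this, hx, one_zpow]
    obtain ⟨Q, hQ⟩ := hpg.exists_le_sylow
    exact ⟨Q, hQ (Subgroup.mem_zpowers x)⟩
  choose Q hQmem using hQ
  -- injection into sigma type
  have hinj : Function.Injective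
      (fun x : {x : G // x ^ 2 = 1} => (⟨Q x, ⟨(x : G), hQmem x⟩⟩ :
        Σ P : Sylow 2 G, (P : Subgroup G))) := by
    intro a b hab
    have := congrArg (fun s : Σ P : Sylow 2 G, (P : Subgroup G) => (s.2 : G)) hab
    exact Subtype.ext this
  have hcard : Nat.card {x : G // x ^ 2 = 1} ≤
      Nat.card (Σ P : Sylow 2 G, (P : Subgroup G)) :=
    Nat.card_le_card_of_injective _ hinj
  -- compute sigma card
  have hfin : Finite (Sylow 2 G) := inferInstance
  have hsig : Nat.card (Σ P : Sylow 2 G, (P : Subgroup G)) =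
      Nat.card (Sylow 2 G) * Nat.card S := by
    have : ∀ P : Sylow 2 G, Nat.card (P : Subgroup G) = Nat.card S := by
      intro P
      rw [Sylow.card_eq_multiplicity, Sylow.card_eq_multiplicity]
    cases nonempty_fintype (Sylow 2 G)
    cases nonempty_fintype G
    simp only [Nat.card_eq_fintype_card, Fintype.card_sigma]
    calc ∑ P : Sylow 2 G, Fintype.card (P : Subgroup G)
        = ∑ _P : Sylow 2 G, Fintype.card (S : Subgroup G) :=
          Finset.sum_congr rfl (fun P _ => by
            simpa [Nat.card_eq_fintype_card] using this P)
      _ = Fintype.card (Sylow 2 G) * Fintype.card (S : Subgroup G) := by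
          rw [Finset.sum_const, Finset.card_univ, smul_eq_mul]
  -- number of Sylows = index of normalizer
  have hm : Nat.card (Sylow 2 G) = N.index := Sylow.card_eq_index_normalizer S
  -- |G| = |N| * index N
  have hG : Nat.card N * N.index = Nat.card G := Subgroup.card_mul_index N
  -- |N| ≥ 2 * |S|
  have hdvd : Nat.card S ∣ Nat.card N := Subgroup.card_dvd_of_le hle
  have h2k : 2 * Nat.card S ≤ Nat.card N := by
    obtain ⟨c, hc⟩ := hdvd
    rcases Nat.lt_or_ge c 2 with hc2 | hc2
    · interval_cases c
      · simp at hc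
        exact absurd hc (Nat.card_pos).ne'
      · exfalso
        apply hne
        symm
        exact Subgroup.eq_of_le_of_card_ge hle (by rw [hc, mul_one])
    · calc 2 * Nat.card S ≤ Nat.card S * c := by
            rw [mul_comm]; exact Nat.mul_le_mul_left _ hc2
        _ = Nat.card N := hc.symm
  -- final contradiction
  have : Nat.card G < Nat.card G := by
    calc Nat.card G < 2 * Nat.card {x : G // x ^ 2 = 1} := h
      _ ≤ 2 * (Nat.card (Sylow 2 G) * Nat.card S) := by
          exact Nat.mul_le_mul_left _ (hcard.trans hsig.le)
      _ = (2 * Nat.card S) * N.index := by rw [hm]; ring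
      _ ≤ Nat.card N * N.index := Nat.mul_le_mul_right _ h2k
      _ = Nat.card G := hG
  exact absurd this (lt_irrefl _)
end

section
/- If G is a finite group in which strictly more than half of the elements satisfy x^2 = 1, then every element of the center Z(G) satisfies z^2 = 1 (i.e., Z(G) is an elementary abelian 2-group). -/
theorem stmt_10 (G : Type*) [Group G] [Finite G]
    (h : 2 * Nat.card {x : G // x ^ 2 = 1} > Nat.card G) :
    ∀ z ∈ Subgroup.center G, z ^ 2 = 1 := by
  intro z hz
  have _inst := Fintype.ofFinite G
  classical
  rw [Subgroup.mem_center_iff] at hz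
  set s : Finset G := Finset.univ.filter (fun x => x ^ 2 = 1) with hs
  have hcard : Nat.card {x : G // x ^ 2 = 1} = s.card := by
    simp [s, Nat.card_eq_fintype_card, Fintype.card_subtype]
  set t : Finset G := s.image (fun x => z * x) with ht
  have htcard : t.card = s.card := Finset.card_image_of_injective _ (mul_right_injective z)
  have hG : Nat.card G = Fintype.card G := Nat.card_eq_fintype_card
  have hunion : (s ∪ t).card ≤ Fintype.card G := by
    simpa using Finset.card_le_card (Finset.subset_univ (s ∪ t))
  have hkey : (s ∪ t).card + (s ∩ t).card = s.card + t.card :=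
    Finset.card_union_add_card_inter s t
  have hinter : 0 < (s ∩ t).card := by omega
  obtain ⟨y, hy⟩ := Finset.card_pos.mp hinter
  rw [Finset.mem_inter] at hy
  obtain ⟨hy1, hy2⟩ := hy
  have hy1' : y ^ 2 = 1 := by simpa [s] using hy1
  obtain ⟨x, hx, hxy⟩ := Finset.mem_image.mp hy2
  have hx' : x ^ 2 = 1 := by simpa [s] using hx
  have hcz := hz x
  have : z ^ 2 * x ^ 2 = 1 := by
    rw [← hy1', ← hxy]
    rw [pow_two, pow_two, pow_two]
    calc z * z * (x * x) = z * (z * x) * x := by group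
    _ = z * (x * z) * x := by rw [hcz]
    _ = z * x * (z * x) := by group
  rw [hx', mul_one] at this
  exact this
end

section
/- If G is a finite group of order 2^n · m with m odd and n ≥ 1, then the number of elements x of G with x^2 = 1 is at most 2^{n-1}(m + 1). -/
/-- Key coset lemma: if `x` is an involution outside a Sylow 2-subgroup `P` of order `2^n`,
then at most `2^(n-1)` elements `h` of `P` satisfy `(x*h)^2 = 1`. -/
lemma stmt_12_aux {G : Type*} [Group G] [Finite G] (P : Sylow 2 G) (n : ℕ)
    (hP : Nat.card (P : Subgroup G) = 2 ^ n)
    (x : G) (hx : x ^ 2 = 1) (hxP : x ∉ (P : Subgroup G)) :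
    Nat.card {h : G // h ∈ (P : Subgroup G) ∧ (x * h) ^ 2 = 1} ≤ 2 ^ (n - 1) := by
  haveI : Fact (Nat.Prime 2) := ⟨Nat.prime_two⟩
  by_contra hlt
  push_neg at hlt
  set K : Set G := {h : G | h ∈ (P : Subgroup G) ∧ (x * h) ^ 2 = 1} with hK
  have hxinv : x⁻¹ = x := by
    rw [← mul_one x⁻¹, ← hx]; group
  have hinvmem : ∀ k ∈ K, x * k * x⁻¹ = k⁻¹ := by
    intro k hk
    have h1 : x * k * (x * k) = 1 := by
      have := hk.2; rwa [pow_two] at this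
    rw [hxinv]
    have : x * k * x = k⁻¹ := by
      have := congrArg (· * k⁻¹) h1
      simpa [mul_assoc] using this
    exact this
  -- the closure of K is all of P
  set M : Subgroup G := Subgroup.closure K with hM
  have hKP : K ⊆ (P : Subgroup G) := fun k hk => hk.1
  have hMP : M ≤ (P : Subgroup G) := (Subgroup.closure_le _).mpr hKP
  have hcardK : Nat.card K = Nat.card {h : G // h ∈ (P : Subgroup G) ∧ (x * h) ^ 2 = 1} := rfl
  have hKM : Nat.card K ≤ Nat.card M := by
    rw [Nat.card_coe_set_eq]
    have h2 : Nat.card M = (M : Set G).ncard := by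
      rw [← Nat.card_coe_set_eq]; rfl
    rw [h2]
    exact Set.ncard_le_ncard (Subgroup.subset_closure) (Set.toFinite _)
  have hMdvd : Nat.card M ∣ 2 ^ n := hP ▸ Subgroup.card_dvd_of_le hMP
  obtain ⟨k, hkn, hMcard⟩ := (Nat.dvd_prime_pow Nat.prime_two).mp hMdvd
  have hkeq : k = n := by
    by_contra hne
    have hklt : k ≤ n - 1 := by omega
    have : Nat.card M ≤ 2 ^ (n - 1) := by
      rw [hMcard]; exact Nat.pow_le_pow_right (by norm_num) hklt
    omega
  have hMeqP : M = (P : Subgroup G) := by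
    apply Subgroup.eq_of_le_of_card_ge hMP
    rw [hP, hMcard, hkeq]
  -- x normalizes P
  have hnorm : ∀ h ∈ (P : Subgroup G), x * h * x⁻¹ ∈ (P : Subgroup G) := by
    have hle : M ≤ Subgroup.comap (MulAut.conj x).toMonoidHom (P : Subgroup G) := by
      apply (Subgroup.closure_le _).mpr
      intro k hk
      simp only [Subgroup.coe_comap, Set.mem_preimage, SetLike.mem_coe]
      have : (MulAut.conj x).toMonoidHom k = x * k * x⁻¹ := rfl
      rw [this, hinvmem k hk]
      exact (P : Subgroup G).inv_mem (hKP hk)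
    intro h hh
    have : h ∈ M := hMeqP ▸ hh
    have := hle this
    simpa using this
  have hxnorm : x ∈ Subgroup.normalizer ((P : Subgroup G) : Set G) :=
    Subgroup.mem_normalizer_fintype (fun k hk => hnorm k hk)
  -- zpowers x is a 2-group
  have hord : orderOf x ∣ 2 := orderOf_dvd_of_pow_eq_one hx
  have hzp : IsPGroup 2 (Subgroup.zpowers x) := by
    obtain ⟨j, hj, hoeq⟩ := (Nat.dvd_prime_pow Nat.prime_two).mp
      (show orderOf x ∣ 2 ^ 1 by simpa using hord)
    exact IsPGroup.of_card ((Nat.card_zpowers x).trans hoeq)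
  have hsup : IsPGroup 2 ((Subgroup.zpowers x ⊔ (P : Subgroup G)) : Subgroup G) :=
    IsPGroup.to_sup_of_normal_right' hzp P.isPGroup'
      ((Subgroup.zpowers_le).mpr hxnorm)
  have hQP := P.is_maximal' hsup le_sup_right
  have hxmem : x ∈ (P : Subgroup G) := by
    rw [← hQP]
    exact Subgroup.mem_sup_left (Subgroup.mem_zpowers x)
  exact hxP hxmem

theorem stmt_12 (G : Type*) [Group G] [Finite G] (n m : ℕ) (hm : Odd m)
    (hn : 1 ≤ n) (hcard : Nat.card G = 2 ^ n * m) :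
    Nat.card {x : G // x ^ 2 = 1} ≤ 2 ^ (n - 1) * (m + 1) := by
  classical
  haveI : Fact (Nat.Prime 2) := ⟨Nat.prime_two⟩
  cases nonempty_fintype G
  obtain ⟨P⟩ : Nonempty (Sylow 2 G) := inferInstance
  have hm0 : m ≠ 0 := by rintro rfl; simp at hm
  have hm2 : ¬ (2 ∣ m) := by
    rw [← even_iff_two_dvd]
    exact Nat.not_even_iff_odd.mpr hm
  -- card of the Sylow subgroup
  have hPcard : Nat.card (P : Subgroup G) = 2 ^ n := by
    rw [Sylow.card_eq_multiplicity, hcard]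
    congr 1
    rw [Nat.factorization_mul (by positivity) hm0]
    simp [Nat.Prime.factorization_pow, Nat.factorization_eq_zero_of_not_dvd hm2,
      Nat.Prime.factorization_self Nat.prime_two]
  -- card of the quotient
  have hquot : Nat.card (G ⧸ (P : Subgroup G)) = m := by
    have h := Subgroup.card_eq_card_quotient_mul_card_subgroup (P : Subgroup G)
    rw [hcard, hPcard, mul_comm (Nat.card (G ⧸ (P : Subgroup G))) (2 ^ n)] at h
    exact (Nat.eq_of_mul_eq_mul_left (by positivity) h.symm)
  -- counting setup
  set S : Finset G := Finset.univ.filter (fun x => x ^ 2 = 1) with hS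
  have hScard : Nat.card {x : G // x ^ 2 = 1} = S.card := by
    rw [Nat.card_eq_fintype_card, Fintype.card_subtype]
  rw [hScard]
  have hfib := Finset.card_eq_sum_card_fiberwise
    (f := fun x : G => (QuotientGroup.mk x : G ⧸ (P : Subgroup G)))
    (s := S) (t := Finset.univ) (fun x _ => Finset.mem_univ _)
  rw [hfib]
  -- per-fiber bounds
  have hbound : ∀ q ∈ (Finset.univ : Finset (G ⧸ (P : Subgroup G))),
      (S.filter (fun x => (QuotientGroup.mk x : G ⧸ (P : Subgroup G)) = q)).card ≤
        (if q = ((1 : G) : G ⧸ (P : Subgroup G)) then 2 ^ n else 2 ^ (n - 1)) := by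
    intro q _
    by_cases hq : q = ((1 : G) : G ⧸ (P : Subgroup G))
    · rw [if_pos hq]
      have hsub : S.filter (fun x => (QuotientGroup.mk x : G ⧸ (P : Subgroup G)) = q) ⊆
          Finset.univ.filter (fun x => x ∈ (P : Subgroup G)) := by
        intro y hy
        simp only [Finset.mem_filter, Finset.mem_univ, true_and] at hy ⊢
        have h1 : (QuotientGroup.mk y : G ⧸ (P : Subgroup G)) =
            ((1 : G) : G ⧸ (P : Subgroup G)) := hq ▸ hy.2
        have := QuotientGroup.eq.mp h1.symm
        simpa using this
      calc (S.filter _).card ≤ _ := Finset.card_le_card hsub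
        _ = 2 ^ n := by
            rw [← Fintype.card_subtype, ← Nat.card_eq_fintype_card]
            exact hPcard
    · rw [if_neg hq]
      set F := S.filter (fun x => (QuotientGroup.mk x : G ⧸ (P : Subgroup G)) = q) with hF
      rcases Finset.eq_empty_or_nonempty F with hFe | ⟨x, hxF⟩
      · simp [hFe]
      · simp only [hF, hS, Finset.mem_filter, Finset.mem_univ, true_and] at hxF
        obtain ⟨hx2, hxq⟩ := hxF
        have hxP : x ∉ (P : Subgroup G) := by
          intro hmem
          apply hq
          rw [← hxq]
          exact QuotientGroup.eq.mpr (by simpa using hmem)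
        set Kf : Finset G := Finset.univ.filter
          (fun h => h ∈ (P : Subgroup G) ∧ (x * h) ^ 2 = 1) with hKf
        have hFsub : F ⊆ Kf.image (fun h => x * h) := by
          intro y hy
          simp only [hF, hS, Finset.mem_filter, Finset.mem_univ, true_and] at hy
          obtain ⟨hy2, hyq⟩ := hy
          refine Finset.mem_image.mpr ⟨x⁻¹ * y, ?_, by group⟩
          simp only [hKf, Finset.mem_filter, Finset.mem_univ, true_and]
          constructor
          · exact QuotientGroup.eq.mp (hxq.trans hyq.symm)
          · have : x * (x⁻¹ * y) = y := by group
            rw [this]; exact hy2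
        calc F.card ≤ (Kf.image (fun h => x * h)).card := Finset.card_le_card hFsub
          _ ≤ Kf.card := Finset.card_image_le
          _ = Nat.card {h : G // h ∈ (P : Subgroup G) ∧ (x * h) ^ 2 = 1} := by
              rw [Nat.card_eq_fintype_card, Fintype.card_subtype]
          _ ≤ 2 ^ (n - 1) := stmt_12_aux P n hPcard x hx2 hxP
  calc ∑ q ∈ (Finset.univ : Finset (G ⧸ (P : Subgroup G))),
        (S.filter (fun x => (QuotientGroup.mk x : G ⧸ (P : Subgroup G)) = q)).card
      ≤ ∑ q ∈ (Finset.univ : Finset (G ⧸ (P : Subgroup G))),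
        (if q = ((1 : G) : G ⧸ (P : Subgroup G)) then 2 ^ n else 2 ^ (n - 1)) := Finset.sum_le_sum hbound
    _ = 2 ^ (n - 1) * (m + 1) := by
        have h2n : 2 ^ n = 2 ^ (n - 1) + 2 ^ (n - 1) := by
          have h : 2 ^ ((n - 1) + 1) = 2 ^ (n - 1) * 2 := pow_succ 2 (n - 1)
          have hn' : (n - 1) + 1 = n := by omega
          rw [hn'] at h
          omega
        have hsplit : ∀ q : G ⧸ (P : Subgroup G),
            (if q = ((1 : G) : G ⧸ (P : Subgroup G)) then 2 ^ n else 2 ^ (n - 1)) =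
            2 ^ (n - 1) + (if q = ((1 : G) : G ⧸ (P : Subgroup G)) then 2 ^ (n - 1) else 0) := by
          intro q
          by_cases hq : q = ((1 : G) : G ⧸ (P : Subgroup G)) <;>
            simp only [hq, if_true, if_false, h2n, add_zero]
        rw [Finset.sum_congr rfl (fun q _ => hsplit q), Finset.sum_add_distrib,
          Finset.sum_const,
          Finset.sum_ite_eq' Finset.univ (((1 : G) : G ⧸ (P : Subgroup G)))]
        simp only [Finset.mem_univ, if_pos, smul_eq_mul]
        have hu : (Finset.univ : Finset (G ⧸ (P : Subgroup G))).card = m := by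
          rw [Finset.card_univ, ← Nat.card_eq_fintype_card]
          exact hquot
        rw [hu]; ring
end

section
/- If G is a finite group of order 2^n · m with m odd, m > 1 and n ≥ 1, then the proportion of elements x with x^2 = 1 is at most 2/3. -/
universe u

theorem aux13 : ∀ (N : ℕ), ∀ (G : Type u) [Group G] [Finite G], Nat.card G = N →
    ∀ p : ℕ, p.Prime → Odd p → p ∣ N →
    3 * Nat.card {x : G // x ^ 2 = 1} ≤ 2 * N := by
  intro N
  induction N using Nat.strong_induction_on with
  | _ N ih =>
  intro G _ _ hN p hp hpodd hpN
  have : Fintype G := Fintype.ofFinite G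
  classical
  by_contra hlt
  push_neg at hlt
  have hNcard : Fintype.card G = N := by rw [← Nat.card_eq_fintype_card, hN]
  have hNpos : 0 < N := by rw [← hNcard]; exact Fintype.card_pos
  have hj : Nat.card {x : G // x ^ 2 = 1} =
      (Finset.univ.filter (fun x : G => x ^ 2 = 1)).card := by
    rw [Nat.card_eq_fintype_card, Fintype.card_subtype]
  rw [hj] at hlt
  have hjpos : 0 < (Finset.univ.filter (fun x : G => x ^ 2 = 1)).card :=
    Finset.card_pos.mpr ⟨1, by simp⟩
  have hp2 : p ≠ 2 := by rintro rfl; exact (Nat.not_odd_iff_even.mpr even_two) hpodd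
  by_cases hc : ∀ x : G, x ^ 2 = 1 → x ∈ Subgroup.center G
  · -- all solutions central: they form a subgroup
    set K : Subgroup G :=
      { carrier := {x : G | x ^ 2 = 1}
        one_mem' := by simp
        mul_mem' := by
          intro a b ha hb
          simp only [Set.mem_setOf_eq] at *
          have hab : Commute a b := ((Subgroup.mem_center_iff.mp (hc a ha)) b).symm
          rw [hab.mul_pow, ha, hb, one_mul]
        inv_mem' := by
          intro a ha
          simp only [Set.mem_setOf_eq] at *
          rw [inv_pow, ha, inv_one] } with hK
    have hKcard : Nat.card K = (Finset.univ.filter (fun x : G => x ^ 2 = 1)).card := by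
      rw [Nat.card_eq_fintype_card, ← Fintype.card_subtype]
      rfl
    have hdvd : (Finset.univ.filter (fun x : G => x ^ 2 = 1)).card ∣ N := by
      rw [← hKcard, ← hN]; exact Subgroup.card_subgroup_dvd_card K
    obtain ⟨k, hk⟩ := hdvd
    have hk1 : k = 1 := by
      by_contra hne
      rcases (by omega : 2 ≤ k ∨ k = 0) with h | h
      · have h2 : (Finset.univ.filter (fun x : G => x ^ 2 = 1)).card * 2 ≤
            (Finset.univ.filter (fun x : G => x ^ 2 = 1)).card * k :=
          Nat.mul_le_mul_left _ h
        omega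
      · subst h; omega
    have hSfuniv : (Finset.univ.filter (fun x : G => x ^ 2 = 1)) = Finset.univ :=
      Finset.eq_univ_of_card _ (by rw [hk1, mul_one] at hk; omega)
    haveI := Fact.mk hp
    obtain ⟨g, hg⟩ := exists_prime_orderOf_dvd_card (G := G) p (by rw [hNcard]; exact hpN)
    have hg2 : g ^ 2 = 1 := by
      have hmem : g ∈ (Finset.univ.filter (fun x : G => x ^ 2 = 1)) := by
        rw [hSfuniv]; exact Finset.mem_univ g
      simpa using hmem
    have hpd2 : p ∣ 2 := by rw [← hg]; exact orderOf_dvd_of_pow_eq_one hg2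
    exact hp2 ((Nat.prime_dvd_prime_iff_eq hp Nat.prime_two).mp hpd2)
  · push_neg at hc
    obtain ⟨x₀, hx₀sq, hx₀nc⟩ := hc
    set H : Subgroup G := Subgroup.centralizer {x₀} with hH
    have hmemH : ∀ y : G, y ∈ H ↔ x₀ * y = y * x₀ := by
      intro y
      rw [hH, Subgroup.mem_centralizer_iff]
      simp
    have hHne : H ≠ ⊤ := by
      intro htop
      apply hx₀nc
      rw [Subgroup.mem_center_iff]
      intro g
      exact ((hmemH g).mp (htop ▸ Subgroup.mem_top g)).symm
    set T : Finset G := (Finset.univ.filter (fun x : G => x ^ 2 = 1)).filter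
      (fun y => x₀ * y = y * x₀) with hT
    have hinv : ∀ u : G, u ^ 2 = 1 → u⁻¹ = u := fun u hu =>
      inv_eq_of_mul_eq_one_right (by rw [← pow_two]; exact hu)
    -- key: 2 * j ≤ a + N
    have hkey : 2 * (Finset.univ.filter (fun x : G => x ^ 2 = 1)).card ≤ T.card + N := by
      set B : Finset G := (Finset.univ.filter (fun x : G => x ^ 2 = 1)).image
        (fun y => x₀ * y) with hB
      have hBcard : B.card = (Finset.univ.filter (fun x : G => x ^ 2 = 1)).card :=
        Finset.card_image_of_injective _ (mul_right_injective x₀)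
      have hsub : (Finset.univ.filter (fun x : G => x ^ 2 = 1)) ∩ B ⊆
          T.image (fun y => x₀ * y) := by
        intro z hz
        rw [Finset.mem_inter] at hz
        obtain ⟨hz1, hz2⟩ := hz
        rw [hB, Finset.mem_image] at hz2
        obtain ⟨y, hy, hyz⟩ := hz2
        have hy2 : y ^ 2 = 1 := by simpa using hy
        have hz2' : z ^ 2 = 1 := by simpa using hz1
        have hcomm : x₀ * y = y * x₀ := by
          have h1 : (x₀ * y)⁻¹ = x₀ * y := hinv _ (hyz ▸ hz2')
          calc x₀ * y = (x₀ * y)⁻¹ := h1.symm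
            _ = y⁻¹ * x₀⁻¹ := by rw [mul_inv_rev]
            _ = y * x₀ := by rw [hinv y hy2, hinv x₀ hx₀sq]
        exact Finset.mem_image.mpr ⟨y, by rw [hT, Finset.mem_filter]; exact ⟨hy, hcomm⟩, hyz⟩
      have h1 : ((Finset.univ.filter (fun x : G => x ^ 2 = 1)) ∩ B).card ≤ T.card :=
        le_trans (Finset.card_le_card hsub) Finset.card_image_le
      have h2 := Finset.card_inter_add_card_union
        (Finset.univ.filter (fun x : G => x ^ 2 = 1)) B
      have h3 : ((Finset.univ.filter (fun x : G => x ^ 2 = 1)) ∪ B).card ≤ N := by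
        rw [← hNcard, ← Finset.card_univ]
        exact Finset.card_le_card (Finset.subset_univ _)
      omega
    have hTH : ∀ y ∈ T, y ∈ H := by
      intro y hy
      rw [hT, Finset.mem_filter] at hy
      exact (hmemH y).mpr hy.2
    have haH : T.card ≤ Nat.card H := by
      rw [Nat.card_eq_fintype_card, Fintype.card_subtype]
      exact Finset.card_le_card (fun y hy => Finset.mem_filter.mpr ⟨Finset.mem_univ y, hTH y hy⟩)
    have hHdvd : Nat.card H ∣ N := by rw [← hN]; exact Subgroup.card_subgroup_dvd_card H
    have hHneN : Nat.card H ≠ N := by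
      intro heq
      exact hHne (Subgroup.eq_top_of_card_eq H (by rw [heq, hN]))
    have hHpos : 0 < Nat.card H := Nat.card_pos
    obtain ⟨k, hk⟩ := hHdvd
    have h3a : N < 3 * T.card := by omega
    have hk2' : k = 2 := by
      by_contra hne
      rcases (by omega : 3 ≤ k ∨ k ≤ 1) with h | h
      · have h4 : Nat.card H * 3 ≤ Nat.card H * k := Nat.mul_le_mul_left _ h
        omega
      · rcases (by omega : k = 0 ∨ k = 1) with rfl | rfl
        · omega
        · omega
    have hNH : N = Nat.card H * 2 := by rw [hk, hk2']
    -- apply induction hypothesis to H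
    have hpH : p ∣ Nat.card H := by
      have hd : p ∣ Nat.card H * 2 := hNH ▸ hpN
      rcases (Nat.Prime.dvd_mul hp).mp hd with h | h
      · exact h
      · exact absurd ((Nat.prime_dvd_prime_iff_eq hp Nat.prime_two).mp h) hp2
    have hIH := ih (Nat.card H) (by omega) (↥H) rfl p hp hpodd hpH
    -- T.card ≤ Nat.card {x : ↥H // x ^ 2 = 1}
    have haSub : T.card ≤ Nat.card {x : ↥H // x ^ 2 = 1} := by
      simp only [Nat.card_eq_fintype_card]
      calc T.card = Fintype.card T := (Fintype.card_coe T).symm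
        _ ≤ Fintype.card {x : ↥H // x ^ 2 = 1} := by
          apply Fintype.card_le_of_injective
            (fun y => ⟨⟨(y : G), hTH y y.2⟩, by
              have hy2 : (y : G) ^ 2 = 1 :=
                (Finset.mem_filter.mp (Finset.mem_filter.mp y.2).1).2
              ext
              push_cast
              simpa using hy2⟩)
          intro y z hyz
          apply Subtype.ext
          exact congrArg (fun w : {x : ↥H // x ^ 2 = 1} => ((w.1 : H) : G)) hyz
    omega

theorem stmt_13 (G : Type*) [Group G] [Finite G] (n m : ℕ) (hm : Odd m)
    (hm1 : 1 < m) (hn : 1 ≤ n) (hcard : Nat.card G = 2 ^ n * m) :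
    3 * Nat.card {x : G // x ^ 2 = 1} ≤ 2 * Nat.card G := by
  have hp : (m.minFac).Prime := Nat.minFac_prime (by omega)
  have hp2 : m.minFac ≠ 2 := by
    intro h
    have h2 : (2 : ℕ) ∣ m := h ▸ Nat.minFac_dvd m
    rw [Nat.odd_iff] at hm
    omega
  have hpodd : Odd m.minFac := hp.odd_of_ne_two hp2
  exact aux13 (Nat.card G) G rfl m.minFac hp hpodd
    (by rw [hcard]; exact Dvd.dvd.mul_left (Nat.minFac_dvd m) (2 ^ n))
end

section
/- If G is a finite group in which strictly more than 3/4 of the elements satisfy x^2 = 1, then every element of G satisfies x^2 = 1; in particular G is an elementary abelian 2-group. -/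
open Finset

theorem stmt_14 (G : Type*) [Group G] [Finite G]
    (h : 4 * Nat.card {x : G // x ^ 2 = 1} > 3 * Nat.card G) :
    ∀ x : G, x ^ 2 = 1 := by
  have : Fintype G := Fintype.ofFinite G
  classical
  set S : Finset G := univ.filter (fun x => x ^ 2 = 1) with hS
  have hmem : ∀ x : G, x ∈ S ↔ x ^ 2 = 1 := by
    intro x; simp [hS]
  have hcardS : Nat.card {x : G // x ^ 2 = 1} = S.card := by
    rw [Nat.card_eq_fintype_card, hS]
    simp [Fintype.card_subtype]
  have hG : Nat.card G = Fintype.card G := Nat.card_eq_fintype_card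
  rw [hcardS, hG] at h
  -- card of translate
  have htrans : ∀ g : G, (S.image (fun x => g * x)).card = S.card := by
    intro g
    apply Finset.card_image_of_injective
    exact fun a b hab => by simpa using hab
  have hinter : ∀ g : G, 2 * S.card ≤ Fintype.card G + (S ∩ S.image (fun x => g * x)).card := by
    intro g
    have h1 := Finset.card_inter_add_card_union S (S.image (fun x => g * x))
    have h2 : (S ∪ S.image (fun x => g * x)).card ≤ Fintype.card G := by
      simpa using Finset.card_le_univ _
    have := htrans g
    omega
  -- step 1: every involution is central
  have hcent : ∀ a : G, a ^ 2 = 1 → ∀ x : G, a * x = x * a := by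
    intro a ha
    have ha' : a * a = 1 := by rw [← sq]; exact ha
    set C : Subgroup G := Subgroup.centralizer {a} with hC
    have hsub : S ∩ S.image (fun x => a * x) ⊆ univ.filter (fun x => x ∈ C) := by
      intro x hx
      simp only [Finset.mem_inter, Finset.mem_image] at hx
      obtain ⟨hx1, s, hs, hxs⟩ := hx
      have hx2 : x * x = 1 := by rw [← sq]; exact (hmem x).1 hx1
      have hax : (a * x) * (a * x) = 1 := by
        subst hxs
        rw [show a * (a * s) = s by rw [← mul_assoc, ha', one_mul]]
        rw [← sq]; exact (hmem s).1 hs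
      have hcomm : x * a = a * x := by
        have hself : (a * x)⁻¹ = a * x := by rw [inv_eq_iff_mul_eq_one]; exact hax
        have hainv : a⁻¹ = a := by rw [inv_eq_iff_mul_eq_one]; exact ha'
        have hxinv : x⁻¹ = x := by rw [inv_eq_iff_mul_eq_one]; exact hx2
        calc x * a = x⁻¹ * a⁻¹ := by rw [hainv, hxinv]
          _ = (a * x)⁻¹ := (mul_inv_rev a x).symm
          _ = a * x := hself
      simp only [Finset.mem_filter, Finset.mem_univ, true_and, hC]
      rw [Subgroup.mem_centralizer_singleton_iff]
      exact hcomm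
    have hcardC : Nat.card C = (univ.filter (fun x => x ∈ C)).card := by
      rw [Nat.card_eq_fintype_card]
      simp [Fintype.card_subtype]
    have hdvd : Nat.card C ∣ Fintype.card G := by
      rw [← hG]; exact Subgroup.card_subgroup_dvd_card C
    have hbig : 2 * Nat.card C > Fintype.card G := by
      have h1 := hinter a
      have h2 := Finset.card_le_card hsub
      omega
    have hCeq : Nat.card C = Fintype.card G := by
      obtain ⟨k, hk⟩ := hdvd
      have hCpos : 0 < Nat.card C := Nat.card_pos
      have hGpos : 0 < Fintype.card G := Fintype.card_pos
      rcases k with _ | _ | k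
      · omega
      · omega
      · have h2 : Nat.card C * 2 ≤ Nat.card C * (k + 1 + 1) := Nat.mul_le_mul_left _ (by omega)
        omega
    have : C = ⊤ := by
      apply Subgroup.eq_top_of_card_eq
      rw [hCeq, hG]
    intro x
    have hx : x ∈ C := this ▸ Subgroup.mem_top x
    exact (Subgroup.mem_centralizer_singleton_iff.mp hx).symm
  -- step 2
  intro g
  have hne : (S ∩ S.image (fun x => g * x)).Nonempty := by
    rw [← Finset.card_pos]
    have := hinter g
    omega
  obtain ⟨x, hx⟩ := hne
  simp only [Finset.mem_inter, Finset.mem_image] at hx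
  obtain ⟨hx1, s, hs, hxs⟩ := hx
  have hs2 : s * s = 1 := by rw [← sq]; exact (hmem s).1 hs
  have hx2 : x * x = 1 := by rw [← sq]; exact (hmem x).1 hx1
  have hcs := hcent s ((hmem s).1 hs)
  -- g = x * s⁻¹, s⁻¹ = s
  have hsinv : s⁻¹ = s := by rw [inv_eq_iff_mul_eq_one]; exact hs2
  have hg : x * s = g := by rw [← hxs, mul_assoc, hs2, mul_one]
  rw [sq, ← hg]
  calc x * s * (x * s) = x * (s * x) * s := by group
    _ = x * (x * s) * s := by rw [hcs x]
    _ = (x * x) * (s * s) := by group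
    _ = 1 := by rw [hx2, hs2, one_mul]
end

section
/- If G is a finite group with 4 · j(G) > 3 · |G| (where j counts elements with x^2 = 1), then G has order a power of 2. -/
lemma half_top {G : Type*} [Group G] [Finite G] (H : Subgroup G)
    (h : Nat.card G < 2 * Nat.card H) : H = ⊤ := by
  have hi := H.index_mul_card
  have hpos : 0 < Nat.card G := Nat.card_pos
  have hHpos : 0 < Nat.card H := Nat.card_pos
  rw [← Subgroup.index_eq_one]
  by_contra hne
  have h2 : 2 ≤ H.index := by
    rcases Nat.eq_zero_or_pos H.index with h0 | h0
    · rw [h0] at hi; omega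
    · omega
  nlinarith

theorem stmt_15 (G : Type*) [Group G] [Finite G]
    (h : 4 * Nat.card {x : G // x ^ 2 = 1} > 3 * Nat.card G) :
    ∃ n : ℕ, Nat.card G = 2 ^ n := by
  classical
  have _inst := Fintype.ofFinite G
  set S : Finset G := Finset.univ.filter (fun x => x ^ 2 = 1) with hS
  have hcard : Nat.card {x : G // x ^ 2 = 1} = S.card := by
    rw [Nat.card_eq_fintype_card, Fintype.card_subtype]
  have hG : Nat.card G = Fintype.card G := Nat.card_eq_fintype_card
  rw [hcard, hG] at h
  have hGpos : 0 < Fintype.card G := Fintype.card_pos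
  -- every a ∈ S is central
  have key : ∀ a ∈ S, ∀ b : G, a * b = b * a := by
    intro a ha b
    have ha2 : a ^ 2 = 1 := by simpa [hS] using ha
    set T : Finset G := S ∩ S.image (fun x => a * x) with hT
    have hTsub : ∀ x ∈ T, x ∈ Subgroup.centralizer {a} := by
      intro x hx
      rw [hT, Finset.mem_inter] at hx
      obtain ⟨hx1, hx2⟩ := hx
      obtain ⟨y, hy, hxy⟩ := Finset.mem_image.mp hx2
      have hx2' : x ^ 2 = 1 := by simpa [hS] using hx1
      have hy2 : y ^ 2 = 1 := by simpa [hS] using hy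
      rw [Subgroup.mem_centralizer_singleton_iff]
      -- y = a⁻¹ x, y² = 1, so (a⁻¹x)² = 1
      have hainv : a⁻¹ = a := by
        rw [← mul_left_cancel_iff (a := a), mul_inv_cancel]
        have := ha2; rw [pow_two] at this; exact this.symm
      have hxinv : x⁻¹ = x := by
        rw [← mul_left_cancel_iff (a := x), mul_inv_cancel]
        have := hx2'; rw [pow_two] at this; exact this.symm
      have hyinv : y = y⁻¹ := by
        rw [← mul_left_cancel_iff (a := y), mul_inv_cancel]
        have := hy2; rw [pow_two] at this; exact this
      -- y = a⁻¹ * x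
      have hy' : y = a * x := by
        rw [← hxy, ← mul_assoc, ← pow_two, ha2, one_mul]
      have : a * x = (a * x)⁻¹ := by rw [← hy']; exact hyinv
      rw [mul_inv_rev, hainv, hxinv] at this
      -- a * x = x * a
      exact this.symm
    -- card T > |G|/2
    have himg : (S.image (fun x => a * x)).card = S.card :=
      Finset.card_image_of_injective S (mul_right_injective a)
    have hunion : (S ∪ S.image (fun x => a * x)).card ≤ Fintype.card G :=
      Finset.card_le_univ _
    have hie := Finset.card_union_add_card_inter S (S.image (fun x => a * x))
    have hTcard : Fintype.card G < 2 * T.card := by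
      rw [hT]; omega
    have hle : T.card ≤ Nat.card (Subgroup.centralizer ({a} : Set G)) := by
      rw [Nat.card_eq_fintype_card]
      classical
      have : T ⊆ ((Subgroup.centralizer ({a} : Set G)) : Set G).toFinset := by
        intro x hx; rw [Set.mem_toFinset]; exact hTsub x hx
      calc T.card ≤ _ := Finset.card_le_card this
        _ = _ := by simp [Set.toFinset_card]
    have hcent : Subgroup.centralizer ({a} : Set G) = ⊤ := by
      apply half_top
      rw [hG]; omega
    have hb : b ∈ Subgroup.centralizer ({a} : Set G) := by rw [hcent]; trivial
    exact (Subgroup.mem_centralizer_singleton_iff.mp hb).symm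
  -- S forms a subgroup
  have key' : ∀ x : G, x ^ 2 = 1 → ∀ b : G, x * b = b * x := by
    intro x hx b
    exact key x (by simp [hS, hx]) b
  let H : Subgroup G :=
    { carrier := {x : G | x ^ 2 = 1}
      one_mem' := by simp
      mul_mem' := by
        intro x y hx hy
        simp only [Set.mem_setOf_eq] at *
        have hc := key' x hx y
        rw [pow_two, mul_assoc, ← mul_assoc y x y, ← hc, mul_assoc,
          ← mul_assoc x x, ← pow_two, hx, one_mul, ← pow_two, hy]
      inv_mem' := by
        intro x hx
        simp only [Set.mem_setOf_eq] at *
        rw [inv_pow, hx, inv_one] }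
  have hHcard : Nat.card H = S.card := by
    rw [Nat.card_eq_fintype_card]
    have : Fintype.card H = Fintype.card {x : G // x ^ 2 = 1} := rfl
    rw [this, Fintype.card_subtype]
  have hHtop : H = ⊤ := by
    apply half_top
    rw [hHcard, hG]; omega
  have hall : ∀ x : G, x ^ 2 = 1 := by
    intro x
    have : x ∈ H := by rw [hHtop]; trivial
    exact this
  have : Fact (Nat.Prime 2) := ⟨Nat.prime_two⟩
  have hp : IsPGroup 2 G := fun g => ⟨1, by simpa using hall g⟩
  exact IsPGroup.iff_card.mp hp
end

section
/- Let G be a finite group of order 2^n such that exactly 3/4 of its elements satisfy x^2 = 1, and suppose there is a surjective homomorphism π : G → D_8 onto the dihedral group of order 8. Then the kernel K of π is an elementary abelian 2-group of order 2^{n-3}, and G is isomorphic to the direct product K × D_8. -/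
open DihedralGroup in
theorem stmt_16 (G : Type*) [Group G] [Finite G] (n : ℕ)
    (hcard : Nat.card G = 2 ^ n)
    (hj : 4 * Nat.card {x : G // x ^ 2 = 1} = 3 * Nat.card G)
    (π : G →* DihedralGroup 4) (hπ : Function.Surjective π) :
    (∀ x ∈ π.ker, x ^ 2 = 1) ∧ Nat.card π.ker = 2 ^ (n - 3) ∧
      Nonempty (G ≃* π.ker × DihedralGroup 4) := by
  classical
  obtain ⟨σ, hσ⟩ : ∃ σ : DihedralGroup 4 → G, ∀ d, π (σ d) = d :=
    ⟨Function.surjInv hπ, Function.surjInv_eq hπ⟩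
  have hD8 : Nat.card (DihedralGroup 4) = 8 := by
    rw [Nat.card_eq_fintype_card, DihedralGroup.card]
  have hK8 : Nat.card G = 8 * Nat.card π.ker := by
    rw [Subgroup.card_eq_card_quotient_mul_card_subgroup π.ker,
      Nat.card_congr (QuotientGroup.quotientKerEquivOfSurjective π hπ).toEquiv, hD8]
  have ePequiv : {g : G // (π g) ^ 2 = 1} ≃ {d : DihedralGroup 4 // d ^ 2 = 1} × π.ker := by
    refine ⟨fun g => (⟨π g.1, g.2⟩, ⟨(σ (π g.1))⁻¹ * g.1, ?_⟩),
      fun p => ⟨σ p.1.1 * p.2.1, ?_⟩, ?_, ?_⟩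
    · simp [MonoidHom.mem_ker, hσ]
    · have hk : π p.2.1 = 1 := p.2.2
      rw [map_mul, hσ, hk, mul_one]
      exact p.1.2
    · rintro ⟨g, hg⟩
      simp
    · rintro ⟨⟨d, hd⟩, ⟨k, hk⟩⟩
      have h1 : π (σ d * k) = d := by
        rw [map_mul, hσ, MonoidHom.mem_ker.mp hk, mul_one]
      refine Prod.ext (Subtype.ext ?_) (Subtype.ext ?_) <;> simp [h1]
  have hT6 : Nat.card {d : DihedralGroup 4 // d ^ 2 = 1} = 6 := by
    rw [Nat.card_eq_fintype_card]; decide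
  have hPcard : Nat.card {g : G // (π g) ^ 2 = 1} = 6 * Nat.card π.ker := by
    rw [Nat.card_congr ePequiv, Nat.card_prod, hT6]
  have hScard : Nat.card {x : G // x ^ 2 = 1} = 6 * Nat.card π.ker := by omega
  have key : ∀ x : G, (π x) ^ 2 = 1 → x ^ 2 = 1 := by
    have hsub : {x : G | x ^ 2 = 1} ⊆ {x : G | (π x) ^ 2 = 1} := by
      intro x hx
      simp only [Set.mem_setOf_eq] at hx ⊢
      rw [← map_pow, hx, map_one]
    have hle : ({x : G | (π x) ^ 2 = 1}).ncard ≤ ({x : G | x ^ 2 = 1}).ncard := by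
      rw [← Nat.card_coe_set_eq, ← Nat.card_coe_set_eq]
      have e1 : Nat.card ↥{x : G | (π x) ^ 2 = 1} = 6 * Nat.card π.ker := hPcard
      have e2 : Nat.card ↥{x : G | x ^ 2 = 1} = 6 * Nat.card π.ker := hScard
      omega
    have heq := Set.eq_of_subset_of_ncard_le hsub hle (Set.toFinite _)
    intro x hx
    have : x ∈ {x : G | x ^ 2 = 1} := by rw [heq]; exact hx
    exact this
  have hker_sq : ∀ x ∈ π.ker, x ^ 2 = 1 := by
    intro x hx
    exact key x (by rw [MonoidHom.mem_ker.mp hx, one_pow])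
  have hKpos : 0 < Nat.card π.ker := Nat.card_pos
  have hn3 : 3 ≤ n := by
    by_contra hn
    have h1 : 2 ^ n ≤ 2 ^ 2 := Nat.pow_le_pow_right (by norm_num) (by omega)
    omega
  have hpow : 2 ^ (n - 3 + 3) = 2 ^ (n - 3) * 2 ^ 3 := pow_add 2 _ 3
  rw [show n - 3 + 3 = n by omega] at hpow
  have hKcard : Nat.card π.ker = 2 ^ (n - 3) := by omega
  -- construct the splitting
  obtain ⟨a, ha⟩ := hπ (sr 0)
  obtain ⟨c, hc⟩ := hπ (sr 1)
  have ha2 : a ^ 2 = 1 := key a (by rw [ha]; decide)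
  have hc2 : c ^ 2 = 1 := key c (by rw [hc]; decide)
  have haa : a * a = 1 := by rw [← pow_two]; exact ha2
  have hcc : c * c = 1 := by rw [← pow_two]; exact hc2
  have hainv : a⁻¹ = a := inv_eq_of_mul_eq_one_right haa
  have hcinv : c⁻¹ = c := inv_eq_of_mul_eq_one_right hcc
  set h : G := a * c with hh
  have hπh : π h = r 1 := by
    rw [hh, map_mul, ha, hc, sr_mul_sr]; norm_num
  have h4 : h ^ 4 = 1 := by
    have := key (h ^ 2) (by rw [map_pow, hπh]; decide)
    rw [← pow_mul] at this; exact this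
  have hmod : ∀ x : ℕ, h ^ x = h ^ (x % 4) := by
    intro x
    conv_lhs => rw [← Nat.div_add_mod x 4]
    rw [pow_add, pow_mul, h4, one_pow, one_mul]
  have h13 : h * h ^ 3 = 1 := by
    rw [← pow_succ']
    rw [show (3:ℕ) + 1 = 4 by norm_num]
    exact h4
  have hinv3 : h⁻¹ = h ^ 3 := inv_eq_of_mul_eq_one_right h13
  have hha : h * a = a * h ^ 3 := by
    rw [← hinv3, hh, mul_inv_rev, hainv, hcinv]
    -- goal : a * c * a = a * (c * a)
    rw [mul_assoc]
  have hpow_comm : ∀ k : ℕ, h ^ k * a = a * h ^ (3 * k) := by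
    intro k
    induction k with
    | zero => simp
    | succ m ih =>
      have : h ^ (m + 1) * a = h ^ m * (h * a) := by
        rw [pow_succ, mul_assoc]
      rw [this, hha, ← mul_assoc, ih, mul_assoc, ← pow_add]
      ring_nf
  have ar1 : ∀ i j : ZMod 4, (i.val + j.val) % 4 = (i + j).val % 4 := by decide
  have ar2 : ∀ i j : ZMod 4, (3 * i.val + j.val) % 4 = (j - i).val % 4 := by decide
  -- the lifting homomorphism
  let φmap : DihedralGroup 4 → G := fun d =>
    match d with
    | .r i => h ^ i.val
    | .sr i => a * h ^ i.val
  have φmul : ∀ d e : DihedralGroup 4, φmap (d * e) = φmap d * φmap e := by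
    rintro (i | i) (j | j)
    · show φmap (r i * r j) = h ^ i.val * h ^ j.val
      rw [r_mul_r]
      show h ^ (i + j).val = _
      rw [← pow_add, hmod (i.val + j.val), hmod ((i + j).val), ar1]
    · show φmap (r i * sr j) = h ^ i.val * (a * h ^ j.val)
      rw [r_mul_sr]
      show a * h ^ (j - i).val = _
      rw [← mul_assoc, hpow_comm, mul_assoc, ← pow_add,
        hmod (3 * i.val + j.val), hmod ((j - i).val), ar2]
    · show φmap (sr i * r j) = a * h ^ i.val * h ^ j.val
      rw [sr_mul_r]
      show a * h ^ (i + j).val = _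
      rw [mul_assoc, ← pow_add, hmod (i.val + j.val), hmod ((i + j).val), ar1]
    · show φmap (sr i * sr j) = (a * h ^ i.val) * (a * h ^ j.val)
      rw [sr_mul_sr]
      show h ^ (j - i).val = _
      rw [mul_assoc, ← mul_assoc (h ^ i.val), hpow_comm, ← mul_assoc, ← mul_assoc,
        haa, one_mul, ← pow_add, hmod (3 * i.val + j.val), hmod ((j - i).val), ar2]
  let φ : DihedralGroup 4 →* G := MonoidHom.mk' φmap φmul
  have hπφ : ∀ d, π (φ d) = d := by
    rintro (i | i)
    · show π (h ^ i.val) = r i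
      rw [map_pow, hπh, r_one_pow]
      congr 1
      simp [ZMod.natCast_val, ZMod.cast_id]
    · show π (a * h ^ i.val) = sr i
      rw [map_mul, map_pow, hπh, ha, r_one_pow, sr_mul_r, zero_add]
      congr 1
      simp [ZMod.natCast_val, ZMod.cast_id]
  -- kernel elements commute with everything whose image is an involution
  have comm : ∀ k ∈ π.ker, ∀ g : G, (π g) ^ 2 = 1 → Commute k g := by
    intro k hk g hg
    have hg2 : g ^ 2 = 1 := key g hg
    have hk2 : k ^ 2 = 1 := hker_sq k hk
    have hgk : (g * k) ^ 2 = 1 := by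
      refine key _ ?_
      rw [map_mul, MonoidHom.mem_ker.mp hk, mul_one, hg]
    have hginv : g⁻¹ = g := inv_eq_of_mul_eq_one_right (by rw [← pow_two]; exact hg2)
    have hkinv : k⁻¹ = k := inv_eq_of_mul_eq_one_right (by rw [← pow_two]; exact hk2)
    have hgkinv : (g * k)⁻¹ = g * k :=
      inv_eq_of_mul_eq_one_right (by rw [← pow_two]; exact hgk)
    have : g * k = k * g := by
      conv_lhs => rw [← hgkinv, mul_inv_rev, hkinv, hginv]
    exact this.symm
  have commφ : ∀ k : π.ker, ∀ d : DihedralGroup 4, Commute (k : G) (φ d) := by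
    intro k d
    have Ca : Commute (k : G) a := comm k k.2 a (by rw [ha]; decide)
    have Cc : Commute (k : G) c := comm k k.2 c (by rw [hc]; decide)
    have Ch : Commute (k : G) h := Ca.mul_right Cc
    rcases d with i | i
    · exact Ch.pow_right i.val
    · exact Ca.mul_right (Ch.pow_right i.val)
  let ψ : π.ker × DihedralGroup 4 →* G :=
    MonoidHom.mk' (fun p => (p.1 : G) * φ p.2) (by
      rintro ⟨k1, d1⟩ ⟨k2, d2⟩
      show ((k1 * k2 : π.ker) : G) * φ (d1 * d2) = ((k1 : G) * φ d1) * ((k2 : G) * φ d2)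
      rw [map_mul, Subgroup.coe_mul]
      have := (commφ k2 d1).eq
      rw [mul_assoc, ← mul_assoc (k2 : G), this, mul_assoc, ← mul_assoc, ← mul_assoc])
  have hbij : Function.Bijective ψ := by
    constructor
    · rintro ⟨k1, d1⟩ ⟨k2, d2⟩ hpq
      have hval : (k1 : G) * φ d1 = (k2 : G) * φ d2 := hpq
      have hd : d1 = d2 := by
        have := congrArg π hval
        rwa [map_mul, map_mul, MonoidHom.mem_ker.mp k1.2,
          MonoidHom.mem_ker.mp k2.2, one_mul, one_mul, hπφ, hπφ] at this
      have hkk : (k1 : G) = k2 := by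
        rw [hd] at hval
        exact mul_right_cancel hval
      exact Prod.ext (Subtype.ext hkk) hd
    · intro g
      have hmem : g * (φ (π g))⁻¹ ∈ π.ker := by
        rw [MonoidHom.mem_ker, map_mul, map_inv, hπφ, mul_inv_cancel]
      refine ⟨(⟨g * (φ (π g))⁻¹, hmem⟩, π g), ?_⟩
      show g * (φ (π g))⁻¹ * φ (π g) = g
      rw [inv_mul_cancel_right]
  exact ⟨hker_sq, hKcard, ⟨(MulEquiv.ofBijective ψ hbij).symm⟩⟩
end

section
/- If G is a finite group in which exactly 3/4 of the elements satisfy x^2 = 1, then G is isomorphic to D_8 × (C_2)^{n-3} for some n ≥ 3, where D_8 is the dihedral group of order 8; in particular |G| = 2^n. -/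
open Finset Subgroup
set_option linter.unusedSectionVars false
set_option maxHeartbeats 1000000
namespace Stmt17
variable {G : Type*} [Group G] [Finite G]




lemma card_filter_mem [Fintype G] (H : Subgroup G) [DecidablePred (· ∈ H)] :
    (Finset.univ.filter (· ∈ H)).card = Nat.card H := by
  rw [Nat.card_eq_fintype_card]
  exact (Fintype.card_subtype _).symm

lemma sq_mul_comm {x y : G} (hx : x ^ 2 = 1) (hy : y ^ 2 = 1) (hxy : (x * y) ^ 2 = 1) :
    x * y = y * x := by
  rw [pow_two] at hx hy hxy
  calc x * y = (x * y)⁻¹ := (inv_eq_of_mul_eq_one_right hxy).symm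
  _ = y⁻¹ * x⁻¹ := mul_inv_rev _ _
  _ = y * x := by rw [inv_eq_of_mul_eq_one_right hx, inv_eq_of_mul_eq_one_right hy]

lemma subtype_card_eq [Fintype G] [DecidablePred (fun x : G => x ^ 2 = 1)] :
    Nat.card {x : G // x ^ 2 = 1} = (Finset.univ.filter (fun x : G => x ^ 2 = 1)).card := by
  rw [Nat.card_eq_fintype_card]
  exact Fintype.card_subtype _



lemma centralizer_lemma (hj : 4 * Nat.card {x : G // x ^ 2 = 1} = 3 * Nat.card G)
    {x : G} (hx : x ^ 2 = 1) (hxc : x ∉ Subgroup.center G) :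
    (∀ g ∈ Subgroup.centralizer ({x} : Set G), g ^ 2 = 1) ∧
      2 * Nat.card (Subgroup.centralizer ({x} : Set G)) = Nat.card G := by
  classical
  cases nonempty_fintype G
  set N := Nat.card G with hN
  have hNf : N = Fintype.card G := Nat.card_eq_fintype_card
  set T : Finset G := Finset.univ.filter (fun g : G => g ^ 2 = 1) with hT
  have hjT : Nat.card {x : G // x ^ 2 = 1} = T.card := by
    rw [Nat.card_eq_fintype_card]; exact Fintype.card_subtype _
  set B : Finset G := T.image (fun t => x * t) with hB
  have hBcard : B.card = T.card := Finset.card_image_of_injective _ (mul_right_injective x)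
  have hxx : x * x = 1 := by rwa [pow_two] at hx
  have hmemB : ∀ g : G, g ∈ B ↔ (x * g) ^ 2 = 1 := by
    intro g
    simp only [hB, Finset.mem_image, hT, Finset.mem_filter, Finset.mem_univ, true_and]
    constructor
    · rintro ⟨t, ht, rfl⟩
      rwa [← mul_assoc, hxx, one_mul]
    · intro h
      exact ⟨x * g, h, by rw [← mul_assoc, hxx, one_mul]⟩
  set C := Subgroup.centralizer ({x} : Set G) with hC
  set Cf : Finset G := Finset.univ.filter (· ∈ C) with hCf
  have hCfcard : Cf.card = Nat.card C := card_filter_mem C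
  -- T ∩ B ⊆ Cf
  have hsub : T ∩ B ⊆ Cf := by
    intro g hg
    rw [Finset.mem_inter] at hg
    obtain ⟨hg1, hg2⟩ := hg
    rw [hT, Finset.mem_filter] at hg1
    rw [hmemB] at hg2
    have hcomm : x * g = g * x := sq_mul_comm hx hg1.2 hg2
    simp only [hCf, Finset.mem_filter, Finset.mem_univ, true_and, hC]
    exact Subgroup.mem_centralizer_iff.2 (by simpa using hcomm)
  -- also every element of Cf is in T ∩ B once we know card facts
  have hunion : (T ∩ B).card + (T ∪ B).card = T.card + B.card :=
    Finset.card_inter_add_card_union T B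
  have hUle : (T ∪ B).card ≤ N := by rw [hNf]; exact Finset.card_le_univ _
  have hinterCf : (T ∩ B).card ≤ Cf.card := Finset.card_le_card hsub
  have hdvd : Nat.card C ∣ N := Subgroup.card_subgroup_dvd_card C
  have hCne : Nat.card C ≠ N := by
    intro h
    apply hxc
    have : C = ⊤ := Subgroup.eq_top_of_card_eq _ (by rw [h])
    rw [Subgroup.mem_center_iff]
    intro g
    have : g ∈ C := this ▸ Subgroup.mem_top g
    exact (Subgroup.mem_centralizer_iff.1 this x rfl).symm
  have hNpos : 0 < N := Nat.card_pos
  have hCpos : 0 < Nat.card C := Nat.card_pos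
  -- 2 * card C ≥ N
  have h2ge : N ≤ 2 * Nat.card C := by
    have h1 : 4 * T.card = 3 * N := by rw [← hjT]; exact hj
    omega
  obtain ⟨c, hc⟩ := hdvd
  have hc2 : c = 2 := by
    rcases Nat.lt_or_ge c 3 with h | h
    · interval_cases c <;> omega
    · exfalso
      have h3 : Nat.card C * 3 ≤ Nat.card C * c := Nat.mul_le_mul_left _ h
      rw [← hc] at h3
      omega
  subst hc2
  have hcard2 : 2 * Nat.card C = N := by omega
  refine ⟨?_, hcard2⟩
  -- now T ∩ B = Cf
  have hinter_ge : Cf.card ≤ (T ∩ B).card := by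
    have h1 : 4 * T.card = 3 * N := by rw [← hjT]; exact hj
    omega
  have heq : T ∩ B = Cf := Finset.eq_of_subset_of_card_le hsub hinter_ge
  intro g hg
  have : g ∈ Cf := by simp [hCf, hg]
  rw [← heq, Finset.mem_inter, hT, Finset.mem_filter] at this
  exact this.1.2


lemma card_sq_le (K : Subgroup G) (h : ∀ g : G, g ^ 2 = 1 → g ∈ K) :
    Nat.card {x : G // x ^ 2 = 1} ≤ Nat.card K := by
  have hinj : Function.Injective (fun x : {x : G // x ^ 2 = 1} => (⟨x.1, h x.1 x.2⟩ : K)) := by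
    intro x y hxy
    apply Subtype.ext
    exact congrArg (fun t : K => t.val) hxy
  exact Nat.card_le_card_of_injective _ hinj

lemma exists_ab (hj : 4 * Nat.card {x : G // x ^ 2 = 1} = 3 * Nat.card G) :
    ∃ a b : G, a ^ 2 = 1 ∧ b ^ 2 = 1 ∧ ¬(a * b = b * a) ∧ a ∉ Subgroup.center G := by
  classical
  have hne : Nonempty {x : G // x ^ 2 = 1} := ⟨⟨1, one_pow 2⟩⟩
  set N := Nat.card G with hN
  have hNpos : 0 < N := Nat.card_pos
  have hjpos : 0 < Nat.card {x : G // x ^ 2 = 1} := Nat.card_pos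
  -- helper: divisor ≥ 3/4 of N equals N
  have hbig : ∀ K : Subgroup G, Nat.card {x : G // x ^ 2 = 1} ≤ Nat.card K → K = ⊤ := by
    intro K hle
    have hdvd : Nat.card K ∣ N := Subgroup.card_subgroup_dvd_card K
    obtain ⟨c, hc⟩ := hdvd
    have hc1 : c = 1 := by
      rcases Nat.lt_or_ge c 2 with h | h
      · interval_cases c <;> omega
      · exfalso
        have h3 : Nat.card K * 2 ≤ Nat.card K * c := Nat.mul_le_mul_left _ h
        rw [← hc] at h3
        omega
    subst hc1
    exact Subgroup.eq_top_of_card_eq _ (by omega)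
  have hstep1 : ∃ a : G, a ^ 2 = 1 ∧ a ∉ Subgroup.center G := by
    by_contra h
    push_neg at h
    have hZ : Subgroup.center G = ⊤ := hbig _ (card_sq_le _ h)
    have hcomm : ∀ x y : G, x * y = y * x := by
      intro x y
      have : y ∈ Subgroup.center G := hZ ▸ Subgroup.mem_top y
      exact (Subgroup.mem_center_iff.1 this x)
    set S : Subgroup G :=
      { carrier := {g : G | g ^ 2 = 1}
        one_mem' := one_pow 2
        mul_mem' := by
          intro p q hp hq
          simp only [Set.mem_setOf_eq, pow_two] at *
          calc p * q * (p * q) = p * p * (q * q) := by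
                rw [mul_assoc p q (p*q), ← mul_assoc q p q, hcomm q p, mul_assoc,
                  ← mul_assoc, ← mul_assoc]
          _ = 1 := by rw [hp, hq, mul_one]
        inv_mem' := by
          intro p hp
          simp only [Set.mem_setOf_eq] at *
          rw [inv_pow, hp, inv_one] } with hS
    have hcard : Nat.card {x : G // x ^ 2 = 1} = Nat.card S :=
      Nat.card_congr (Equiv.subtypeEquivRight (fun g => Iff.rfl))
    have hdvd : Nat.card S ∣ N := Subgroup.card_subgroup_dvd_card S
    obtain ⟨c, hc⟩ := hdvd
    rcases Nat.lt_or_ge c 2 with h2 | h2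
    · interval_cases c <;> omega
    · have h3 : Nat.card S * 2 ≤ Nat.card S * c := Nat.mul_le_mul_left _ h2
      rw [← hc] at h3
      omega
  obtain ⟨a, ha, hac⟩ := hstep1
  refine ⟨a, ?_⟩
  by_contra h
  push_neg at h
  have hTC : ∀ g : G, g ^ 2 = 1 → g ∈ Subgroup.centralizer ({a} : Set G) := by
    intro g hg
    by_cases hcase : a * g = g * a
    · exact Subgroup.mem_centralizer_iff.2 (by simpa using hcase)
    · exact absurd (h g ha hg hcase) hac
  have := hbig _ (card_sq_le _ hTC)
  apply hac
  rw [Subgroup.mem_center_iff]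
  intro g
  have hg : g ∈ Subgroup.centralizer ({a} : Set G) := this ▸ Subgroup.mem_top g
  exact (Subgroup.mem_centralizer_iff.1 hg a rfl).symm


lemma sandwich {Z M T' : Subgroup G} (hZM : Z ≤ M) (hMT : M ≤ T')
    (h2 : 2 * Nat.card Z = Nat.card T') (hne : M ≠ Z) : M = T' := by
  obtain ⟨c, hc⟩ := Subgroup.card_dvd_of_le hZM
  have hdvd : Nat.card M ∣ Nat.card T' := Subgroup.card_dvd_of_le hMT
  have hZpos : 0 < Nat.card Z := Nat.card_pos
  have hMpos : 0 < Nat.card M := Nat.card_pos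
  have hcd : c ∣ 2 := by
    have : Nat.card Z * c ∣ Nat.card Z * 2 := by rw [← hc, mul_comm (Nat.card Z) 2, h2]; exact hdvd
    exact (Nat.mul_dvd_mul_iff_left hZpos).1 this
  rcases (Nat.dvd_prime Nat.prime_two).1 hcd with rfl | rfl
  · exact absurd (Subgroup.eq_of_le_of_card_ge hZM (by omega)).symm hne
  · exact Subgroup.eq_of_le_of_card_ge hMT (by omega)


open scoped IsMulCommutative in
theorem main (G : Type*) [Group G] [Finite G]
    (hj : 4 * Nat.card {x : G // x ^ 2 = 1} = 3 * Nat.card G) :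
    ∃ n : ℕ, 3 ≤ n ∧ Nat.card G = 2 ^ n ∧
      Nonempty (G ≃* DihedralGroup 4 × (Fin (n - 3) → Multiplicative (ZMod 2))) := by
  classical
  obtain ⟨a, b, ha, hb, hab, hac⟩ := exists_ab hj
  set N := Nat.card G with hN
  have hNpos : 0 < N := Nat.card_pos
  obtain ⟨hHsq, hHcard⟩ := centralizer_lemma hj ha hac
  have hbc : b ∉ Subgroup.center G := fun h => hab ((Subgroup.mem_center_iff.1 h) a)
  obtain ⟨hBsq, hBcard⟩ := centralizer_lemma hj hb hbc
  set H := Subgroup.centralizer ({a} : Set G) with hHdef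
  set Cb := Subgroup.centralizer ({b} : Set G) with hCbdef
  have hbH : b ∉ H := fun h => hab (Subgroup.mem_centralizer_iff.1 h a rfl)
  have haH : a ∈ H := Subgroup.mem_centralizer_iff.2 (by simp)
  have hbCb : b ∈ Cb := Subgroup.mem_centralizer_iff.2 (by simp)
  have hHpos : 0 < Nat.card H := Nat.card_pos
  have hBpos : 0 < Nat.card Cb := Nat.card_pos
  -- indices
  have idxH : H.index = 2 := by
    have h1 : Nat.card H * H.index = N := Subgroup.card_mul_index H
    have h2 : Nat.card H * 2 = N := by omega
    exact Nat.eq_of_mul_eq_mul_left hHpos (h1.trans h2.symm)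
  have idxB : Cb.index = 2 := by
    have h1 : Nat.card Cb * Cb.index = N := Subgroup.card_mul_index Cb
    have h2 : Nat.card Cb * 2 = N := by omega
    exact Nat.eq_of_mul_eq_mul_left hBpos (h1.trans h2.symm)
  -- the central element z
  set z := a * b * a * b with hzdef
  have hzeq : (a * b) * (a * b) = z := by rw [hzdef]; group
  have hzH : z ∈ H := hzeq ▸ Subgroup.mul_self_mem_of_index_two idxH (a * b)
  have hz2 : z ^ 2 = 1 := hHsq z hzH
  have hzz : z * z = 1 := by rwa [pow_two] at hz2
  have hzinv : z⁻¹ = z := inv_eq_of_mul_eq_one_right hzz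
  have hainv : a⁻¹ = a := inv_eq_of_mul_eq_one_right (by rwa [pow_two] at ha)
  have hbinv : b⁻¹ = b := inv_eq_of_mul_eq_one_right (by rwa [pow_two] at hb)
  have hzCb : z ∈ Cb := by
    have h1 := Subgroup.mul_self_mem_of_index_two idxB (b * a)
    have h2 : b * a * (b * a) = z⁻¹ := by
      rw [hzdef]
      simp [mul_inv_rev, hainv, hbinv, mul_assoc]
    rw [h2, hzinv] at h1
    exact h1
  have hz1 : z ≠ 1 := by
    intro h
    exact hab (sq_mul_comm ha hb (by rw [pow_two, hzeq]; exact h))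
  have hza : a * z = z * a := Subgroup.mem_centralizer_iff.1 hzH a rfl
  have hzb : b * z = z * b := Subgroup.mem_centralizer_iff.1 hzCb b rfl
  -- ⟨H, b⟩ = ⊤
  have Htop : Subgroup.closure ((H : Set G) ∪ {b}) = ⊤ := by
    have hHM : H ≤ Subgroup.closure ((H : Set G) ∪ {b}) :=
      fun x hx => Subgroup.subset_closure (Set.mem_union_left _ hx)
    refine sandwich hHM le_top (by rw [Subgroup.card_top]; exact hHcard) ?_
    intro h
    apply hbH
    rw [← h]
    exact Subgroup.subset_closure (Or.inr rfl)
  -- center = H ⊓ Cb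
  have hEcenter : Subgroup.center G = H ⊓ Cb := by
    apply le_antisymm
    · exact le_inf (fun g hg => Subgroup.mem_centralizer_iff.2
        (fun h _ => Subgroup.mem_center_iff.1 hg h))
        (fun g hg => Subgroup.mem_centralizer_iff.2
        (fun h _ => Subgroup.mem_center_iff.1 hg h))
    · intro e he
      rw [Subgroup.mem_center_iff]
      intro g
      have hg : g ∈ Subgroup.closure ((H : Set G) ∪ {b}) := Htop ▸ Subgroup.mem_top g
      have : Commute e g := by
        induction hg using Subgroup.closure_induction with
        | mem x hx =>
          rcases hx with hx | hx
          · exact (sq_mul_comm (hHsq x hx) (hHsq e he.1) (hHsq _ (mul_mem hx he.1))).symm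
          · rw [Set.mem_singleton_iff] at hx
            rw [hx]
            exact (Subgroup.mem_centralizer_iff.1 he.2 b rfl).symm
        | one => exact Commute.one_right e
        | mul x y _ _ hx hy => exact Commute.mul_right hx hy
        | inv x _ hx => exact Commute.inv_right hx
      exact this.symm
  -- card of the center
  have hEcard : 2 * Nat.card (Subgroup.center G) = Nat.card Cb := by
    have idx2 : (H.subgroupOf Cb).index = 2 := by
      rw [Subgroup.index_eq_two_iff]
      refine ⟨⟨b, hbCb⟩, fun x => ?_⟩
      have hx : ((x * ⟨b, hbCb⟩ : Cb) : G) = (x : G) * b := rfl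
      by_cases hxH : (x : G) ∈ H
      · simp [Xor', Subgroup.mem_subgroupOf, hx, Subgroup.mul_mem_iff_of_index_two idxH, hxH, hbH]
      · simp [Xor', Subgroup.mem_subgroupOf, hx, Subgroup.mul_mem_iff_of_index_two idxH, hxH, hbH]
    have h1 : Nat.card (H.subgroupOf Cb) * 2 = Nat.card Cb := by
      have h := Subgroup.card_mul_index (H.subgroupOf Cb)
      rwa [idx2] at h
    have h2 : Nat.card (H.subgroupOf Cb) = Nat.card ↥(H ⊓ Cb) := by
      conv_lhs => rw [← Subgroup.inf_subgroupOf_right H Cb]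
      exact Nat.card_congr (Subgroup.subgroupOfEquivOfLe inf_le_right).toEquiv
    rw [hEcenter, ← h2]
    omega
  have hm4 : 4 * Nat.card (Subgroup.center G) = N := by omega
  have hZle : Subgroup.center G ≤ H := (le_of_eq hEcenter).trans inf_le_left
  have hZsq : ∀ g ∈ Subgroup.center G, g ^ 2 = 1 := fun g hg => hHsq g (hZle hg)
  have hzZ : z ∈ Subgroup.center G := by
    rw [hEcenter]
    exact Subgroup.mem_inf.2 ⟨hzH, hzCb⟩
  -- the vector space structure on the center
  letI : Module (ZMod 2) (Additive ↥(Subgroup.center G)) := AddCommGroup.zmodModule (by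
    intro x
    have hx2 : Additive.toMul x ^ 2 = 1 := by
      apply Subtype.ext
      push_cast
      exact hZsq _ (Additive.toMul x).2
    calc (2 : ℕ) • x = (2 : ℕ) • Additive.ofMul (Additive.toMul x) := rfl
    _ = Additive.ofMul (Additive.toMul x ^ 2) := by rw [ofMul_pow]
    _ = 0 := by rw [hx2]; rfl)
  haveI : Module.Finite (ZMod 2) (Additive ↥(Subgroup.center G)) := Module.Finite.of_finite
  set V := Additive ↥(Subgroup.center G) with hVdef
  set zb : V := Additive.ofMul (⟨z, hzZ⟩ : ↥(Subgroup.center G)) with hzbdef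
  have hzb0 : zb ≠ 0 := by
    intro h
    apply hz1
    rw [hzbdef] at h
    have := congrArg (fun v : V => ((Additive.toMul v : ↥(Subgroup.center G)) : G)) h
    simpa using this
  obtain ⟨W, hW⟩ := Submodule.exists_isCompl (Submodule.span (ZMod 2) {zb})
  set rk := Module.finrank (ZMod 2) V with hrkdef
  haveI : Fintype V := Fintype.ofFinite V
  have hrkV : Nat.card V = 2 ^ rk := by
    rw [Nat.card_eq_fintype_card, Module.card_eq_pow_finrank (K := ZMod 2) (V := V), ZMod.card]
  have hmV : Nat.card ↥(Subgroup.center G) = Nat.card V := Nat.card_congr Additive.ofMul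
  have hNn : N = 2 ^ (rk + 2) := by
    rw [pow_add]
    omega
  have hm2 : 2 ≤ Nat.card ↥(Subgroup.center G) := by
    haveI : Nontrivial ↥(Subgroup.center G) :=
      ⟨⟨1, ⟨z, hzZ⟩, fun h => hz1 (congrArg Subtype.val h).symm⟩⟩
    exact Finite.one_lt_card
  have hrk1 : 1 ≤ rk := by
    by_contra h
    push_neg at h
    interval_cases rk
    · simp at hrkV; omega
  set k := rk - 1 with hkdef
  have hfinW : Module.finrank (ZMod 2) ↥W = k := by
    have h1 : Module.finrank (ZMod 2) ↥(Submodule.span (ZMod 2) {zb}) = 1 :=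
      finrank_span_singleton hzb0
    have h2 := Submodule.finrank_add_eq_of_isCompl hW
    omega
  set eW : ↥W ≃ₗ[ZMod 2] (Fin k → ZMod 2) :=
    ((Module.finBasis (ZMod 2) ↥W).reindex (finCongr hfinW)).equivFun with heWdef
  -- the element ρ and the dihedral hom
  haveI : Fact (1 < 4) := ⟨by norm_num⟩
  set ρ := a * b with hρdef
  have haa : a * a = 1 := by rwa [pow_two] at ha
  have hρ2 : ρ ^ 2 = z := by rw [pow_two]; exact hzeq
  have hρ4 : ρ ^ 4 = 1 := by
    rw [show (4 : ℕ) = 2 * 2 from rfl, pow_mul, hρ2, hz2]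
  have hmod : ∀ s : ℕ, ρ ^ (s % 4) = ρ ^ s := by
    intro s
    conv_rhs => rw [← Nat.div_add_mod s 4]
    rw [pow_add, pow_mul, hρ4, one_pow, one_mul]
  have hval : ∀ i j : ZMod 4, ρ ^ ((i + j).val) = ρ ^ i.val * ρ ^ j.val := by
    intro i j
    rw [ZMod.val_add, hmod, pow_add]
  have hvneg : ∀ i : ZMod 4, ρ ^ ((-i).val) = (ρ ^ i.val)⁻¹ := by
    intro i
    apply eq_inv_of_mul_eq_one_left
    rw [← hval, neg_add_cancel]
    simp [ZMod.val_zero]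
  have hsemi : SemiconjBy a ρ⁻¹ ρ := by
    show a * ρ⁻¹ = ρ * a
    rw [hρdef, mul_inv_rev, hainv, hbinv, ← mul_assoc, mul_assoc]
  have hrhoA : ∀ v : ℕ, ρ ^ v * a = a * (ρ ^ v)⁻¹ := by
    intro v
    have h := (hsemi.pow_right v).eq
    rw [inv_pow] at h
    exact h.symm
  set f : DihedralGroup 4 → G := fun d => match d with
    | .r i => ρ ^ i.val
    | .sr i => a * ρ ^ i.val
    with hfdef
  have hfmul : ∀ d e : DihedralGroup 4, f (d * e) = f d * f e := by
    rintro (i | i) (j | j)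
    · rw [DihedralGroup.r_mul_r]
      exact hval i j
    · rw [DihedralGroup.r_mul_sr]
      show a * ρ ^ (j - i).val = ρ ^ i.val * (a * ρ ^ j.val)
      rw [← mul_assoc, hrhoA, ← hvneg, mul_assoc, ← hval, neg_add_eq_sub]
    · rw [DihedralGroup.sr_mul_r]
      show a * ρ ^ (i + j).val = (a * ρ ^ i.val) * ρ ^ j.val
      rw [hval, mul_assoc]
    · rw [DihedralGroup.sr_mul_sr]
      show ρ ^ (j - i).val = (a * ρ ^ i.val) * (a * ρ ^ j.val)
      rw [mul_assoc, ← mul_assoc (ρ ^ i.val) a, hrhoA, ← hvneg, ← mul_assoc, ← mul_assoc, haa,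
        one_mul, ← hval, neg_add_eq_sub]
  set ψ : DihedralGroup 4 →* G := MonoidHom.mk' f hfmul with hψdef
  -- the hom from the 2-torsion part
  set e1 : (Fin k → Multiplicative (ZMod 2)) ≃* Multiplicative (Fin k → ZMod 2) :=
    (MulEquiv.piMultiplicative (fun _ : Fin k => ZMod 2)).symm with he1def
  set ℓ : (Fin k → ZMod 2) →ₗ[ZMod 2] V := W.subtype.comp eW.symm.toLinearMap with hldef
  set χ : (Fin k → Multiplicative (ZMod 2)) →* G :=
    (Subgroup.center G).subtype.comp
      ((MulEquiv.multiplicativeAdditive ↥(Subgroup.center G)).toMonoidHom.comp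
      ((AddMonoidHom.toMultiplicative ℓ.toAddMonoidHom).comp e1.toMonoidHom)) with hχdef
  have hχZ : ∀ w, χ w ∈ Subgroup.center G := by
    intro w
    exact ((MulEquiv.multiplicativeAdditive ↥(Subgroup.center G))
      ((AddMonoidHom.toMultiplicative ℓ.toAddMonoidHom) (e1 w))).2
  have hcomm : ∀ d w, Commute (ψ d) (χ w) := fun d w =>
    Subgroup.mem_center_iff.1 (hχZ w) (ψ d)
  set Φ : (DihedralGroup 4 × (Fin k → Multiplicative (ZMod 2))) →* G :=
    ψ.noncommCoprod χ hcomm with hΦdef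
  have hΦap : ∀ p, Φ p = ψ p.1 * χ p.2 := fun _ => rfl
  set K := Φ.range with hKdef
  have haK : a ∈ K := by
    refine ⟨(.sr 0, 1), ?_⟩
    rw [hΦap]
    show (a * ρ ^ (0 : ZMod 4).val) * χ 1 = a
    rw [map_one, ZMod.val_zero, pow_zero, mul_one, mul_one]
  have hρK : ρ ∈ K := by
    refine ⟨(.r 1, 1), ?_⟩
    rw [hΦap]
    show ρ ^ (1 : ZMod 4).val * χ 1 = ρ
    rw [map_one, ZMod.val_one, pow_one, mul_one]
  have hbK : b ∈ K := by
    have : a * ρ = b := by rw [hρdef, ← mul_assoc, haa, one_mul]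
    exact this ▸ mul_mem haK hρK
  have hzK : z ∈ K := by
    have : ρ * ρ = z := hzeq
    exact this ▸ mul_mem hρK hρK
  have hχval : ∀ (w : V) (hw : w ∈ W),
      χ ((MulEquiv.piMultiplicative (fun _ : Fin k => ZMod 2))
        (Multiplicative.ofAdd (eW ⟨w, hw⟩))) = ((Additive.toMul w : ↥(Subgroup.center G)) : G) := by
    intro w hw
    show ((Additive.toMul (ℓ (Multiplicative.toAdd (e1 _))) : ↥(Subgroup.center G)) : G) = _
    congr 1
    show Additive.toMul (ℓ _) = Additive.toMul w
    congr 1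
    show (W.subtype (eW.symm _)) = w
    rw [show Multiplicative.toAdd (e1 ((MulEquiv.piMultiplicative (fun _ : Fin k => ZMod 2))
      (Multiplicative.ofAdd (eW ⟨w, hw⟩)))) = eW ⟨w, hw⟩ from by
        rw [he1def, MulEquiv.symm_apply_apply]; rfl]
    rw [LinearEquiv.symm_apply_apply]
    rfl
  have hZK : ∀ ζ, ζ ∈ Subgroup.center G → ζ ∈ K := by
    intro ζ hζ
    have hmem : (Additive.ofMul (⟨ζ, hζ⟩ : ↥(Subgroup.center G)) : V) ∈
        (Submodule.span (ZMod 2) {zb}) ⊔ W := by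
      rw [hW.sup_eq_top]; trivial
    obtain ⟨l, hl, w, hw, hsum⟩ := Submodule.mem_sup.1 hmem
    obtain ⟨c, hc⟩ := Submodule.mem_span_singleton.1 hl
    have hwK : ((Additive.toMul w : ↥(Subgroup.center G)) : G) ∈ K := by
      rw [← hχval w hw]
      exact ⟨(1, _), by rw [hΦap]; show ψ 1 * _ = _; rw [map_one, one_mul]⟩
    have hc01 : c = 0 ∨ c = 1 := by
      have : ∀ t : ZMod 2, t = 0 ∨ t = 1 := by decide
      exact this c
    rcases hc01 with rfl | rfl
    · rw [zero_smul] at hc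
      rw [← hc, zero_add] at hsum
      have : ζ = ((Additive.toMul w : ↥(Subgroup.center G)) : G) := by
        rw [hsum]; rfl
      rw [this]
      exact hwK
    · rw [one_smul] at hc
      rw [← hc] at hsum
      have : ζ = z * ((Additive.toMul w : ↥(Subgroup.center G)) : G) := by
        have h1 : Additive.toMul (zb + w) = Additive.toMul zb * Additive.toMul w := rfl
        have h2 := congrArg (fun v : V => ((Additive.toMul v : ↥(Subgroup.center G)) : G)) hsum
        have h3 : ((Additive.toMul (zb + w) : ↥(Subgroup.center G)) : G) = ζ := h2
        rw [h1] at h3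
        exact h3.symm
      rw [this]
      exact mul_mem hzK hwK
  -- K = ⊤
  have hHK : H ≤ K := by
    have hMH : Subgroup.closure ({a} ∪ (Subgroup.center G : Set G)) ≤ H := by
      rw [Subgroup.closure_le]
      rintro x (hx | hx)
      · rw [Set.mem_singleton_iff] at hx
        rw [hx]; exact haH
      · exact hZle hx
    have hZM : Subgroup.center G ≤ Subgroup.closure ({a} ∪ (Subgroup.center G : Set G)) :=
      fun x hx => Subgroup.subset_closure (Set.mem_union_right _ hx)
    have hMeq : Subgroup.closure ({a} ∪ (Subgroup.center G : Set G)) = H := by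
      refine sandwich hZM hMH (by omega) ?_
      intro hMZ
      exact hac (hMZ ▸ Subgroup.subset_closure (Set.mem_union_left _ rfl))
    rw [← hMeq, Subgroup.closure_le]
    rintro x (hx | hx)
    · rw [Set.mem_singleton_iff] at hx
      rw [hx]; exact haK
    · exact hZK x hx
  have hKtop : K = ⊤ := by
    refine sandwich hHK le_top (by rw [Subgroup.card_top]; exact hHcard) ?_
    intro hKH
    exact hbH (hKH ▸ hbK)
  have hsurj : Function.Surjective Φ := by
    intro g
    have hg : g ∈ K := hKtop ▸ Subgroup.mem_top g
    obtain ⟨p, hp⟩ := hg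
    exact ⟨p, hp⟩
  -- cardinality
  have hcards : Nat.card (DihedralGroup 4 × (Fin k → Multiplicative (ZMod 2))) = N := by
    have hmc : Nat.card (Multiplicative (ZMod 2)) = 2 := by
      rw [Nat.card_eq_fintype_card]
      rfl
    rw [Nat.card_prod, DihedralGroup.nat_card, Nat.card_fun, hmc, Nat.card_eq_fintype_card,
      Fintype.card_fin, hNn]
    have : rk + 2 = k + 3 := by omega
    rw [this, pow_succ, pow_succ, pow_succ]
    ring
  have hbij : Function.Bijective Φ :=
    (Nat.bijective_iff_surjective_and_card Φ).2 ⟨hsurj, hcards⟩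
  refine ⟨rk + 2, by omega, hNn, ?_⟩
  rw [show rk + 2 - 3 = k from by omega]
  exact ⟨(MulEquiv.ofBijective Φ hbij).symm⟩

end Stmt17

theorem stmt_17 (G : Type*) [Group G] [Finite G]
    (hj : 4 * Nat.card {x : G // x ^ 2 = 1} = 3 * Nat.card G) :
    ∃ n : ℕ, 3 ≤ n ∧ Nat.card G = 2 ^ n ∧
      Nonempty (G ≃* DihedralGroup 4 × (Fin (n - 3) → Multiplicative (ZMod 2))) := by
  exact Stmt17.main G hj
end
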